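/- (Intersecting Gyrochords Theorem.) Let O ∈ 𝔹, 0 < R < s, and let A1, A2, B1, B2 ∈ 𝔹 satisfy |OA1| = |OA2| = |OB1| = |OB2| = R with A1 ≠ A2 and B1 ≠ B2. Let P be a point lying strictly between A1 and A2 on the Euclidean segment from A1 to A2, and also strictly between B1 and B2 on the Euclidean segment from B1 to B2 (so that the two gyrochords A1A2 and B1B2 intersect at P). Then γ_{|PA1|}·|PA1| · γ_{|PA2|}·|PA2| / (γ_{|A1A2|} + 1) = γ_{|PB1|}·|PB1| · γ_{|PB2|}·|PB2| / (γ_{|B1B2|} + 1). -/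

import Mathlib

set_option maxHeartbeats 2000000


open RealInnerProductSpace

/-- Lorentz gamma factor of a vector `v` in the `s`-ball of `ℝⁿ`. -/
noncomputable def egamma {n : ℕ} (s : ℝ) (v : EuclideanSpace ℝ (Fin n)) : ℝ :=
  1 / Real.sqrt (1 - ‖v‖ ^ 2 / s ^ 2)

/-- Einstein addition on the `s`-ball of `ℝⁿ`. -/
noncomputable def eadd {n : ℕ} (s : ℝ) (u v : EuclideanSpace ℝ (Fin n)) :
    EuclideanSpace ℝ (Fin n) :=
  (1 / (1 + ⟪u, v⟫ / s ^ 2)) •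
    (u + (1 / egamma s u) • v + (egamma s u / (s ^ 2 * (1 + egamma s u))) • ⟪u, v⟫ • u)

/-- Gyroangle at vertex `X` between points `Y` and `Z`. -/
noncomputable def gyroangle {n : ℕ} (s : ℝ) (X Y Z : EuclideanSpace ℝ (Fin n)) : ℝ :=
  Real.arccos ⟪‖eadd s (-X) Y‖⁻¹ • eadd s (-X) Y, ‖eadd s (-X) Z‖⁻¹ • eadd s (-X) Z⟫

/-- Gamma factor of a real gyrodistance `d`. -/
noncomputable def gammaR (s d : ℝ) : ℝ := 1 / Real.sqrt (1 - d ^ 2 / s ^ 2)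

lemma inner_lt {n : ℕ} {s : ℝ} (hs : 0 < s) {u v : EuclideanSpace ℝ (Fin n)}
    (hu : ‖u‖ < s) (hv : ‖v‖ < s) : |⟪u, v⟫| < s ^ 2 := by
  calc |⟪u, v⟫| ≤ ‖u‖ * ‖v‖ := abs_real_inner_le_norm u v
    _ < s ^ 2 := by nlinarith [norm_nonneg u, norm_nonneg v]

lemma scalar_id (s g m b2 : ℝ) (hs : s ≠ 0) (hg : g ≠ 0) (h1g : 1+g ≠ 0)
    (hD : s^2 + m ≠ 0) :
    1 - ((1/(1+m/s^2)*(1+g/(s^2*(1+g))*m))^2*(s^2-s^2/g^2)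
      + 2*((1/(1+m/s^2)*(1+g/(s^2*(1+g))*m)) * ((1/(1+m/s^2)*(1/g))*m))
      + (1/(1+m/s^2)*(1/g))^2*b2)/s^2
    = (1-(s^2-s^2/g^2)/s^2)*(1-b2/s^2)/(1+m/s^2)^2 := by
  have hD' : 1 + m/s^2 ≠ 0 := by
    intro h; apply hD
    field_simp at h; linarith
  field_simp
  ring

lemma norm_eadd_sq {n : ℕ} {s : ℝ} (hs : 0 < s) {u v : EuclideanSpace ℝ (Fin n)}
    (hu : ‖u‖ < s) (hv : ‖v‖ < s) :
    1 - ‖eadd s u v‖ ^ 2 / s ^ 2 =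
      (1 - ‖u‖ ^ 2 / s ^ 2) * (1 - ‖v‖ ^ 2 / s ^ 2) / (1 + ⟪u, v⟫ / s ^ 2) ^ 2 := by
  have hs2 : (0:ℝ) < s ^ 2 := by positivity
  have hu2 : ‖u‖ ^ 2 < s ^ 2 := by
    have := abs_nonneg (‖u‖); nlinarith [norm_nonneg u]
  have hua : (0:ℝ) < 1 - ‖u‖ ^ 2 / s ^ 2 := by
    rw [sub_pos, div_lt_one hs2]; exact hu2
  have him := inner_lt hs hu hv
  have hD : (0:ℝ) < 1 + ⟪u, v⟫ / s ^ 2 := by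
    rw [abs_lt] at him
    have : -1 < ⟪u, v⟫ / s ^ 2 := by
      rw [lt_div_iff₀ hs2]; linarith [him.1]
    linarith
  set g := egamma s u with hgdef
  have hgpos : 0 < g := by
    rw [hgdef, egamma]
    positivity
  have hg2 : g ^ 2 * (1 - ‖u‖ ^ 2 / s ^ 2) = 1 := by
    rw [hgdef, egamma, div_pow, one_pow, Real.sq_sqrt hua.le]
    exact one_div_mul_cancel (ne_of_gt hua)
  have hexp : eadd s u v =
      ((1 / (1 + ⟪u, v⟫ / s ^ 2)) * (1 + (egamma s u / (s ^ 2 * (1 + egamma s u))) * ⟪u, v⟫)) • u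
      + ((1 / (1 + ⟪u, v⟫ / s ^ 2)) * (1 / egamma s u)) • v := by
    rw [eadd]
    module
  rw [hexp]
  rw [norm_add_sq_real, norm_smul, norm_smul, real_inner_smul_left, real_inner_smul_right,
    mul_pow, mul_pow]
  simp only [Real.norm_eq_abs, sq_abs]
  rw [← hgdef]
  have hg0 : g ≠ 0 := ne_of_gt hgpos
  have ha : ‖u‖ ^ 2 = s ^ 2 - s ^ 2 / g ^ 2 := by
    field_simp at hg2 ⊢
    nlinarith [hg2]
  rw [ha]
  have h1g : (1:ℝ) + g ≠ 0 := by positivity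
  have hsne : s ≠ 0 := ne_of_gt hs
  have hDm : s ^ 2 + ⟪u, v⟫ ≠ 0 := by
    have : (0:ℝ) < s ^ 2 * (1 + ⟪u, v⟫ / s ^ 2) := mul_pos hs2 hD
    rw [mul_add, mul_one, mul_div_cancel₀ _ (ne_of_gt hs2)] at this
    exact ne_of_gt this
  generalize ⟪u, v⟫ = m at hDm ⊢
  generalize ‖v‖ ^ 2 = b2
  linear_combination scalar_id s g m b2 hsne hg0 h1g hDm

/-- The version for `⊖u ⊕ v`. -/
lemma norm_eadd_sq' {n : ℕ} {s : ℝ} (hs : 0 < s) {u v : EuclideanSpace ℝ (Fin n)}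
    (hu : ‖u‖ < s) (hv : ‖v‖ < s) :
    1 - ‖eadd s (-u) v‖ ^ 2 / s ^ 2 =
      (1 - ‖u‖ ^ 2 / s ^ 2) * (1 - ‖v‖ ^ 2 / s ^ 2) / (1 - ⟪u, v⟫ / s ^ 2) ^ 2 := by
  have h := norm_eadd_sq hs (u := -u) (v := v) (by simpa using hu) hv
  simpa [inner_neg_left, sub_eq_add_neg, neg_div] using h

lemma sq_eq_of_nonneg {a b : ℝ} (ha : 0 ≤ a) (hb : 0 ≤ b) (h : a ^ 2 = b ^ 2) : a = b := by
  rw [← Real.sqrt_sq ha, h, Real.sqrt_sq hb]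

/-- gammaR of the gyrodistance. -/
lemma gamma_eadd {n : ℕ} {s : ℝ} (hs : 0 < s) {u v : EuclideanSpace ℝ (Fin n)}
    (hu : ‖u‖ < s) (hv : ‖v‖ < s) :
    gammaR s ‖eadd s (-u) v‖ =
      (1 - ⟪u, v⟫ / s ^ 2) /
        (Real.sqrt (1 - ‖u‖ ^ 2 / s ^ 2) * Real.sqrt (1 - ‖v‖ ^ 2 / s ^ 2)) := by
  have hs2 : (0:ℝ) < s ^ 2 := by positivity
  have hua : (0:ℝ) < 1 - ‖u‖ ^ 2 / s ^ 2 := by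
    have : ‖u‖ ^ 2 < s ^ 2 := by nlinarith [norm_nonneg u]
    rw [sub_pos, div_lt_one hs2]; exact this
  have hva : (0:ℝ) < 1 - ‖v‖ ^ 2 / s ^ 2 := by
    have : ‖v‖ ^ 2 < s ^ 2 := by nlinarith [norm_nonneg v]
    rw [sub_pos, div_lt_one hs2]; exact this
  have hc : (0:ℝ) < 1 - ⟪u, v⟫ / s ^ 2 := by
    have := (abs_lt.mp (inner_lt hs hu hv)).2
    have : ⟪u, v⟫ / s ^ 2 < 1 := by rw [div_lt_one hs2]; exact this
    linarith
  rw [gammaR, norm_eadd_sq' hs hu hv]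
  rw [Real.sqrt_div (by positivity : (0:ℝ) ≤ (1 - ‖u‖ ^ 2 / s ^ 2) * (1 - ‖v‖ ^ 2 / s ^ 2)),
    Real.sqrt_sq hc.le, Real.sqrt_mul hua.le, one_div_div]


lemma ball_pos {n : ℕ} {s : ℝ} (hs : 0 < s) {u : EuclideanSpace ℝ (Fin n)}
    (hu : ‖u‖ < s) : (0:ℝ) < 1 - ‖u‖ ^ 2 / s ^ 2 := by
  have hs2 : (0:ℝ) < s ^ 2 := by positivity
  have : ‖u‖ ^ 2 < s ^ 2 := by nlinarith [norm_nonneg u]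
  rw [sub_pos, div_lt_one hs2]; exact this

lemma inner_pos {n : ℕ} {s : ℝ} (hs : 0 < s) {u v : EuclideanSpace ℝ (Fin n)}
    (hu : ‖u‖ < s) (hv : ‖v‖ < s) : (0:ℝ) < 1 - ⟪u, v⟫ / s ^ 2 := by
  have hs2 : (0:ℝ) < s ^ 2 := by positivity
  have := (abs_lt.mp (inner_lt hs hu hv)).2
  have : ⟪u, v⟫ / s ^ 2 < 1 := by rw [div_lt_one hs2]; exact this
  linarith

lemma gammad_sq {n : ℕ} {s : ℝ} (hs : 0 < s) {u v : EuclideanSpace ℝ (Fin n)}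
    (hu : ‖u‖ < s) (hv : ‖v‖ < s) :
    (gammaR s ‖eadd s (-u) v‖ * ‖eadd s (-u) v‖) ^ 2 =
      s ^ 2 * ((1 - ⟪u, v⟫ / s ^ 2) ^ 2 - (1 - ‖u‖ ^ 2 / s ^ 2) * (1 - ‖v‖ ^ 2 / s ^ 2)) /
        ((1 - ‖u‖ ^ 2 / s ^ 2) * (1 - ‖v‖ ^ 2 / s ^ 2)) := by
  have hua := ball_pos hs hu
  have hva := ball_pos hs hv
  have hc := inner_pos hs hu hv
  have hsne : s ≠ 0 := ne_of_gt hs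
  have hd2 : ‖eadd s (-u) v‖ ^ 2 =
      s ^ 2 * (1 - (1 - ‖u‖ ^ 2 / s ^ 2) * (1 - ‖v‖ ^ 2 / s ^ 2) / (1 - ⟪u, v⟫ / s ^ 2) ^ 2) := by
    rw [← norm_eadd_sq' hs hu hv]
    field_simp
    ring
  have h1 : (0:ℝ) < s ^ 2 - ‖u‖ ^ 2 := by nlinarith [norm_nonneg u]
  have h2 : (0:ℝ) < s ^ 2 - ‖v‖ ^ 2 := by nlinarith [norm_nonneg v]
  have h3 : (0:ℝ) < s ^ 2 - ⟪u, v⟫ := by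
    have : (0:ℝ) < s ^ 2 * (1 - ⟪u, v⟫ / s ^ 2) := by positivity
    rw [mul_sub, mul_one, mul_div_cancel₀ _ (by positivity : (s:ℝ) ^ 2 ≠ 0)] at this
    exact this
  rw [mul_pow, gamma_eadd hs hu hv, div_pow, mul_pow, Real.sq_sqrt hua.le, Real.sq_sqrt hva.le,
    hd2]
  generalize ⟪u, v⟫ = m at h3 ⊢
  generalize ‖u‖ ^ 2 = a at h1 ⊢
  generalize ‖v‖ ^ 2 = b at h2 ⊢
  field_simp [hsne, h1.ne', h2.ne', h3.ne']

lemma chord_power {n : ℕ} {s : ℝ} (hs : 0 < s) {O X1 X2 P : EuclideanSpace ℝ (Fin n)}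
    (hO : ‖O‖ < s) (hX1 : ‖X1‖ < s) (hX2 : ‖X2‖ < s)
    {R : ℝ} (hR1 : ‖eadd s (-O) X1‖ = R) (hR2 : ‖eadd s (-O) X2‖ = R)
    (hbtw : Sbtw ℝ X1 P X2) :
    gammaR s ‖eadd s (-P) X1‖ * ‖eadd s (-P) X1‖ *
        (gammaR s ‖eadd s (-P) X2‖ * ‖eadd s (-P) X2‖) /
        (gammaR s ‖eadd s (-X1) X2‖ + 1) =
      s ^ 2 * ((gammaR s R) ^ 2 - (gammaR s ‖eadd s (-O) P‖) ^ 2) /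
        (2 * (gammaR s R) ^ 2) := by
  have hs2 : (0:ℝ) < s ^ 2 := by positivity
  -- extract the parameter t
  obtain ⟨t, ⟨ht0, ht1⟩, hPt⟩ := hbtw.mem_image_Ioo
  have hP : P = (1 - t) • X1 + t • X2 := by
    rw [← hPt, AffineMap.lineMap_apply_module]
    try module
  have hPb : ‖P‖ < s := by
    calc ‖P‖ ≤ ‖(1 - t) • X1‖ + ‖t • X2‖ := hP ▸ norm_add_le _ _
      _ = (1 - t) * ‖X1‖ + t * ‖X2‖ := by
          rw [norm_smul, norm_smul, Real.norm_eq_abs, Real.norm_eq_abs,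
            abs_of_pos (by linarith), abs_of_pos ht0]
      _ < (1 - t) * s + t * s := by
          apply add_lt_add
          · exact mul_lt_mul_of_pos_left hX1 (by linarith)
          · exact mul_lt_mul_of_pos_left hX2 ht0
      _ = s := by ring
  -- inner product identities
  have hw1 : ⟪P, X1⟫ = (1 - t) * ‖X1‖ ^ 2 + t * ⟪X1, X2⟫ := by
    rw [hP]
    simp only [inner_add_left, inner_add_right, real_inner_smul_left, real_inner_smul_right,
      real_inner_self_eq_norm_sq, real_inner_comm X2 X1]
    try ring
  have hw2 : ⟪P, X2⟫ = (1 - t) * ⟪X1, X2⟫ + t * ‖X2‖ ^ 2 := by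
    rw [hP]
    simp only [inner_add_left, inner_add_right, real_inner_smul_left, real_inner_smul_right,
      real_inner_self_eq_norm_sq, real_inner_comm X2 X1]
    try ring
  have hwO : ⟪O, P⟫ = (1 - t) * ⟪O, X1⟫ + t * ⟪O, X2⟫ := by
    rw [hP]
    simp only [inner_add_left, inner_add_right, real_inner_smul_left, real_inner_smul_right,
      real_inner_self_eq_norm_sq, real_inner_comm X2 X1]
    try ring
  have hwP : ‖P‖ ^ 2 = (1 - t) ^ 2 * ‖X1‖ ^ 2 + 2 * t * (1 - t) * ⟪X1, X2⟫
      + t ^ 2 * ‖X2‖ ^ 2 := by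
    rw [← real_inner_self_eq_norm_sq P, hP]
    simp only [inner_add_left, inner_add_right, real_inner_smul_left, real_inner_smul_right,
      real_inner_self_eq_norm_sq, real_inner_comm X2 X1, norm_smul, Real.norm_eq_abs,
      mul_pow, sq_abs]
    try ring
  -- gamma formulas
  have hu1 := ball_pos hs hX1
  have hu2 := ball_pos hs hX2
  have huO := ball_pos hs hO
  have huP := ball_pos hs hPb
  have hwp := inner_pos hs hX1 hX2
  have hcO1p := inner_pos hs hO hX1
  have hcO2p := inner_pos hs hO hX2
  have hg12 := gamma_eadd hs hX1 hX2
  have hgR1 : gammaR s R = (1 - ⟪O, X1⟫ / s ^ 2) /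
      (Real.sqrt (1 - ‖O‖ ^ 2 / s ^ 2) * Real.sqrt (1 - ‖X1‖ ^ 2 / s ^ 2)) := by
    rw [← hR1]; exact gamma_eadd hs hO hX1
  have hgR2 : gammaR s R = (1 - ⟪O, X2⟫ / s ^ 2) /
      (Real.sqrt (1 - ‖O‖ ^ 2 / s ^ 2) * Real.sqrt (1 - ‖X2‖ ^ 2 / s ^ 2)) := by
    rw [← hR2]; exact gamma_eadd hs hO hX2
  have hgOP := gamma_eadd hs hO hPb
  have hG1sq := gammad_sq hs hPb hX1
  have hG2sq := gammad_sq hs hPb hX2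
  have hG1n : 0 ≤ gammaR s ‖eadd s (-P) X1‖ * ‖eadd s (-P) X1‖ :=
    mul_nonneg (by rw [gammaR]; positivity) (norm_nonneg _)
  have hG2n : 0 ≤ gammaR s ‖eadd s (-P) X2‖ * ‖eadd s (-P) X2‖ :=
    mul_nonneg (by rw [gammaR]; positivity) (norm_nonneg _)
  set G1 := gammaR s ‖eadd s (-P) X1‖ * ‖eadd s (-P) X1‖ with hG1d
  set G2 := gammaR s ‖eadd s (-P) X2‖ * ‖eadd s (-P) X2‖ with hG2d
  -- abbreviations
  set u1 := 1 - ‖X1‖ ^ 2 / s ^ 2 with hu1d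
  set u2 := 1 - ‖X2‖ ^ 2 / s ^ 2 with hu2d
  set uO := 1 - ‖O‖ ^ 2 / s ^ 2 with huOd
  set uP := 1 - ‖P‖ ^ 2 / s ^ 2 with huPd
  set w := 1 - ⟪X1, X2⟫ / s ^ 2 with hwd
  set c1 := 1 - ⟪P, X1⟫ / s ^ 2 with hc1d
  set c2 := 1 - ⟪P, X2⟫ / s ^ 2 with hc2d
  set cO1 := 1 - ⟪O, X1⟫ / s ^ 2 with hcO1d
  set cO2 := 1 - ⟪O, X2⟫ / s ^ 2 with hcO2d
  set cOP := 1 - ⟪O, P⟫ / s ^ 2 with hcOPd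
  set a1 := Real.sqrt u1 with ha1d
  set a2 := Real.sqrt u2 with ha2d
  set aO := Real.sqrt uO with haOd
  set aP := Real.sqrt uP with haPd
  have ha1p : 0 < a1 := Real.sqrt_pos.mpr hu1
  have ha2p : 0 < a2 := Real.sqrt_pos.mpr hu2
  have haOp : 0 < aO := Real.sqrt_pos.mpr huO
  have haPp : 0 < aP := Real.sqrt_pos.mpr huP
  have ha1sq : a1 ^ 2 = u1 := Real.sq_sqrt hu1.le
  have ha2sq : a2 ^ 2 = u2 := Real.sq_sqrt hu2.le
  have haOsq : aO ^ 2 = uO := Real.sq_sqrt huO.le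
  have haPsq : aP ^ 2 = uP := Real.sq_sqrt huP.le
  -- scalar relations
  have hc1 : c1 = (1 - t) * u1 + t * w := by
    rw [hc1d, hu1d, hwd]; linear_combination (-1 / s ^ 2) * hw1
  have hc2 : c2 = (1 - t) * w + t * u2 := by
    rw [hc2d, hu2d, hwd]; linear_combination (-1 / s ^ 2) * hw2
  have hcOP : cOP = (1 - t) * cO1 + t * cO2 := by
    rw [hcOPd, hcO1d, hcO2d]; linear_combination (-1 / s ^ 2) * hwO
  have huPs : uP = (1 - t) ^ 2 * u1 + 2 * t * (1 - t) * w + t ^ 2 * u2 := by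
    rw [huPd, hu1d, hu2d, hwd]; linear_combination (-1 / s ^ 2) * hwP
  have hq1 : c1 ^ 2 - uP * u1 = t ^ 2 * (w ^ 2 - u1 * u2) := by
    rw [hc1, huPs]; ring
  have hq2 : c2 ^ 2 - uP * u2 = (1 - t) ^ 2 * (w ^ 2 - u1 * u2) := by
    rw [hc2, huPs]; ring
  -- Q nonneg
  have hQ : 0 ≤ w ^ 2 - u1 * u2 := by
    have hcl : G1 ^ 2 * (uP * u1) = s ^ 2 * (c1 ^ 2 - uP * u1) := by
      rw [hG1sq, div_mul_cancel₀ _ (ne_of_gt (mul_pos huP hu1))]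
    rw [hq1] at hcl
    have h6 : (0:ℝ) < s ^ 2 * t ^ 2 := by positivity
    have h7 : 0 ≤ s ^ 2 * t ^ 2 * (w ^ 2 - u1 * u2) := by
      calc (0:ℝ) ≤ G1 ^ 2 * (uP * u1) := by positivity
        _ = s ^ 2 * (t ^ 2 * (w ^ 2 - u1 * u2)) := hcl
        _ = s ^ 2 * t ^ 2 * (w ^ 2 - u1 * u2) := by ring
    have h8 := div_nonneg h7 h6.le
    rwa [mul_div_cancel_left₀ _ h6.ne'] at h8
  -- product of the two gyrolength factors
  have hG12 : G1 * G2
      = s ^ 2 * t * (1 - t) * (w ^ 2 - u1 * u2) / (uP * (a1 * a2)) := by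
    apply sq_eq_of_nonneg (mul_nonneg hG1n hG2n)
    · apply div_nonneg
      · have h1 : (0:ℝ) ≤ s ^ 2 * t * (1 - t) :=
          mul_nonneg (mul_nonneg hs2.le ht0.le) (by linarith)
        exact mul_nonneg h1 hQ
      · exact (mul_pos huP (mul_pos ha1p ha2p)).le
    · rw [mul_pow G1 G2, hG1sq, hG2sq, hq1, hq2, ← ha1sq, ← ha2sq]
      field_simp [ha1p.ne', ha2p.ne', huP.ne']
  rw [hG12, hg12, hgR1, hgOP]
  -- eliminate cO2, cOP, uP
  have hcross : cO2 * a1 = cO1 * a2 := by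
    have h := hgR1.symm.trans hgR2
    rw [div_eq_div_iff (mul_pos haOp ha1p).ne' (mul_pos haOp ha2p).ne'] at h
    have haOne : aO ≠ 0 := ne_of_gt haOp
    have h2 : aO * (cO2 * a1) = aO * (cO1 * a2) := by linear_combination -h
    exact mul_left_cancel₀ haOne h2
  have hcO2e : cO2 = cO1 * a2 / a1 := by
    rw [eq_div_iff (ne_of_gt ha1p)]
    linear_combination hcross
  rw [hcOP, hcO2e]
  rw [div_pow ((1 - t) * cO1 + t * (cO1 * a2 / a1)) (aO * aP), mul_pow aO aP, haPsq, huPs,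
    ← ha1sq, ← ha2sq]
  have hden : (0:ℝ) < w + a1 * a2 := add_pos hwp (mul_pos ha1p ha2p)
  have huPp : (0:ℝ) < (1 - t) ^ 2 * a1 ^ 2 + 2 * t * (1 - t) * w + t ^ 2 * a2 ^ 2 := by
    rw [ha1sq, ha2sq, ← huPs]; exact huP
  have hcO1ne : cO1 ≠ 0 := ne_of_gt hcO1p
  field_simp [ha1p.ne', ha2p.ne', haOp.ne', huPp.ne', hden.ne', hcO1ne]
  ring

/-- **Intersecting Gyrochords Theorem.** -/
theorem intersecting_gyrochords {n : ℕ} (hn : 2 ≤ n) (s : ℝ) (hs : 0 < s)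
    (O A1 A2 B1 B2 P : EuclideanSpace ℝ (Fin n)) (hO : ‖O‖ < s)
    (R : ℝ) (hRpos : 0 < R) (hRs : R < s)
    (hA1 : ‖A1‖ < s) (hA2 : ‖A2‖ < s) (hB1 : ‖B1‖ < s) (hB2 : ‖B2‖ < s)
    (hRA1 : ‖eadd s (-O) A1‖ = R) (hRA2 : ‖eadd s (-O) A2‖ = R)
    (hRB1 : ‖eadd s (-O) B1‖ = R) (hRB2 : ‖eadd s (-O) B2‖ = R)
    (hA : A1 ≠ A2) (hB : B1 ≠ B2)
    (hbtwA : Sbtw ℝ A1 P A2) (hbtwB : Sbtw ℝ B1 P B2)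
    (dA1 dA2 dB1 dB2 dA dB : ℝ)
    (hdA1 : dA1 = ‖eadd s (-P) A1‖) (hdA2 : dA2 = ‖eadd s (-P) A2‖)
    (hdB1 : dB1 = ‖eadd s (-P) B1‖) (hdB2 : dB2 = ‖eadd s (-P) B2‖)
    (hdA : dA = ‖eadd s (-A1) A2‖) (hdB : dB = ‖eadd s (-B1) B2‖) :
    gammaR s dA1 * dA1 * (gammaR s dA2 * dA2) / (gammaR s dA + 1) =
      gammaR s dB1 * dB1 * (gammaR s dB2 * dB2) / (gammaR s dB + 1) := by
  subst hdA1 hdA2 hdB1 hdB2 hdA hdB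
  rw [chord_power hs hO hA1 hA2 hRA1 hRA2 hbtwA,
    chord_power hs hO hB1 hB2 hRB1 hRB2 hbtwB]
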